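/- Suppose g : ℝ^m → ℝ satisfies the Łojasiewicz inequality |g(x) - g(x̄)|^θ ≤ K‖∇g(x)‖ with exponent θ ∈ [1/2, 1) and constant K > 0 on a neighborhood of a critical point x̄ of g. Then the function H(x,y) = g(x) + (1/2)‖y - x‖² satisfies the Łojasiewicz inequality with the same exponent θ (and some constant K' > 0) on a neighborhood of (x̄, x̄). -/

import Mathlib

open Filter Topology RealInnerProductSpace

lemma rpow_add_le_add_rpow_real {a b p : ℝ} (ha : 0 ≤ a) (hb : 0 ≤ b)
    (hp : 0 ≤ p) (hp1 : p ≤ 1) : (a + b) ^ p ≤ a ^ p + b ^ p := by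
  lift a to NNReal using ha
  lift b to NNReal using hb
  have := NNReal.rpow_add_le_add_rpow a b hp hp1
  exact_mod_cast this

theorem loja_transfer {m : ℕ} (g : EuclideanSpace ℝ (Fin m) → ℝ)
    (hg : Differentiable ℝ g) (x₀ : EuclideanSpace ℝ (Fin m))
    (hcrit : gradient g x₀ = 0) (θ K ε : ℝ)
    (hθ₁ : 1 / 2 ≤ θ) (hθ₂ : θ < 1) (hK : 0 < K) (hε : 0 < ε)
    (hKL : ∀ x, ‖x - x₀‖ < ε → |g x - g x₀| ^ θ ≤ K * ‖gradient g x‖) :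
    ∃ K' > (0 : ℝ), ∃ ε' > (0 : ℝ),
      ∀ x y : EuclideanSpace ℝ (Fin m), ‖(x, y) - (x₀, x₀)‖ < ε' →
        |(g x + (1 / 2) * ‖y - x‖ ^ 2) - g x₀| ^ θ ≤
          K' * ‖fderiv ℝ
            (fun p : EuclideanSpace ℝ (Fin m) × EuclideanSpace ℝ (Fin m) =>
              g p.1 + (1 / 2) * ‖p.2 - p.1‖ ^ 2) (x, y)‖ := by
  have hθ0 : (0:ℝ) ≤ θ := le_trans (by norm_num) hθ₁
  refine ⟨K + 1, by linarith, min ε (1/2), lt_min hε (by norm_num), ?_⟩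
  intro x y hxy
  set d : EuclideanSpace ℝ (Fin m) := y - x with hd
  have hφ : HasFDerivAt
      (fun p : EuclideanSpace ℝ (Fin m) × EuclideanSpace ℝ (Fin m) => p.2 - p.1)
      (ContinuousLinearMap.snd ℝ (EuclideanSpace ℝ (Fin m)) (EuclideanSpace ℝ (Fin m)) -
        ContinuousLinearMap.fst ℝ (EuclideanSpace ℝ (Fin m)) (EuclideanSpace ℝ (Fin m))) (x, y) :=
    (hasFDerivAt_snd).sub (hasFDerivAt_fst)
  have hinner := (hφ.inner ℝ hφ).const_mul (1/2 : ℝ)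
  have hg1 : HasFDerivAt
      (fun p : EuclideanSpace ℝ (Fin m) × EuclideanSpace ℝ (Fin m) => g p.1)
      ((fderiv ℝ g x).comp
        (ContinuousLinearMap.fst ℝ (EuclideanSpace ℝ (Fin m)) (EuclideanSpace ℝ (Fin m)))) (x, y) :=
    ((hg x).hasFDerivAt).comp (x, y) hasFDerivAt_fst
  have hH0 := hg1.add hinner
  set L := (fderiv ℝ g x).comp
      (ContinuousLinearMap.fst ℝ (EuclideanSpace ℝ (Fin m)) (EuclideanSpace ℝ (Fin m))) +
      (1/2 : ℝ) • ((fderivInnerCLM ℝ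
          ((x, y).2 - (x, y).1, (x, y).2 - (x, y).1)).comp
        ((ContinuousLinearMap.snd ℝ (EuclideanSpace ℝ (Fin m)) (EuclideanSpace ℝ (Fin m)) -
          ContinuousLinearMap.fst ℝ (EuclideanSpace ℝ (Fin m)) (EuclideanSpace ℝ (Fin m))).prod
          (ContinuousLinearMap.snd ℝ (EuclideanSpace ℝ (Fin m)) (EuclideanSpace ℝ (Fin m)) -
          ContinuousLinearMap.fst ℝ (EuclideanSpace ℝ (Fin m)) (EuclideanSpace ℝ (Fin m))))) with hL
  have hH : HasFDerivAt
      (fun p : EuclideanSpace ℝ (Fin m) × EuclideanSpace ℝ (Fin m) =>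
        g p.1 + (1/2) * ‖p.2 - p.1‖ ^ 2) L (x, y) := by
    simpa only [real_inner_self_eq_norm_sq, Pi.add_def] using hH0
  have hfd : fderiv ℝ
      (fun p : EuclideanSpace ℝ (Fin m) × EuclideanSpace ℝ (Fin m) =>
        g p.1 + (1/2) * ‖p.2 - p.1‖ ^ 2) (x, y) = L := hH.fderiv
  have hgradeq : fderiv ℝ g x =
      InnerProductSpace.toDual ℝ (EuclideanSpace ℝ (Fin m)) (gradient g x) :=
    ((hg x).hasGradientAt.hasFDerivAt).fderiv
  have hLval : ∀ u v : EuclideanSpace ℝ (Fin m),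
      L (u, v) = ⟪gradient g x, u⟫ + ⟪d, v - u⟫ := by
    intro u v
    simp only [hL, ContinuousLinearMap.add_apply, ContinuousLinearMap.comp_apply,
      ContinuousLinearMap.coe_fst', ContinuousLinearMap.smul_apply,
      ContinuousLinearMap.prod_apply, ContinuousLinearMap.sub_apply,
      ContinuousLinearMap.coe_snd', fderivInnerCLM_apply, hgradeq,
      InnerProductSpace.toDual_apply_apply, smul_eq_mul]
    rw [real_inner_comm (v - u) ((x, y).2 - (x, y).1)]
    have : ((x, y).2 - (x, y).1 : EuclideanSpace ℝ (Fin m)) = d := rfl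
    rw [this]; ring
  have hdL : ‖d‖ ≤ ‖L‖ := by
    rcases eq_or_ne d 0 with h0 | h0
    · simp [h0]
    · have h1 : ‖L (0, d)‖ ≤ ‖L‖ * ‖((0 : EuclideanSpace ℝ (Fin m)), d)‖ := L.le_opNorm _
      have h2 : L (0, d) = ‖d‖ ^ 2 := by
        rw [hLval, inner_zero_right, zero_add, sub_zero, real_inner_self_eq_norm_sq]
      have h3 : ‖((0 : EuclideanSpace ℝ (Fin m)), d)‖ = ‖d‖ := by
        rw [Prod.norm_def]; simp only [norm_zero]; exact max_eq_right (norm_nonneg d)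
      rw [h2, h3] at h1
      have hdpos : 0 < ‖d‖ := norm_pos_iff.mpr h0
      rw [Real.norm_eq_abs, abs_of_nonneg (by positivity)] at h1
      have h4 : ‖d‖ * ‖d‖ ≤ ‖L‖ * ‖d‖ := by rw [← sq]; exact h1
      exact le_of_mul_le_mul_right h4 hdpos
  have hgL : ‖gradient g x‖ ≤ ‖L‖ := by
    rcases eq_or_ne (gradient g x) 0 with h0 | h0
    · simp [h0]
    · set u := gradient g x
      have h1 : ‖L (u, u)‖ ≤ ‖L‖ * ‖(u, u)‖ := L.le_opNorm _
      have h2 : L (u, u) = ‖u‖ ^ 2 := by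
        rw [hLval, sub_self, inner_zero_right, add_zero, real_inner_self_eq_norm_sq]
      have h3 : ‖(u, u)‖ = ‖u‖ := by rw [Prod.norm_def, max_self]
      rw [h2, h3] at h1
      have hupos : 0 < ‖u‖ := norm_pos_iff.mpr h0
      rw [Real.norm_eq_abs, abs_of_nonneg (by positivity)] at h1
      have h4 : ‖u‖ * ‖u‖ ≤ ‖L‖ * ‖u‖ := by rw [← sq]; exact h1
      exact le_of_mul_le_mul_right h4 hupos
  have hnorm : ‖(x, y) - (x₀, x₀)‖ = max ‖x - x₀‖ ‖y - x₀‖ := by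
    simp [Prod.norm_def]
  rw [hnorm] at hxy
  have hx1 : ‖x - x₀‖ < ε :=
    lt_of_le_of_lt (le_max_left _ _) (lt_of_lt_of_le hxy (min_le_left _ _))
  have hx2 : ‖x - x₀‖ < 1/2 :=
    lt_of_le_of_lt (le_max_left _ _) (lt_of_lt_of_le hxy (min_le_right _ _))
  have hy2 : ‖y - x₀‖ < 1/2 :=
    lt_of_le_of_lt (le_max_right _ _) (lt_of_lt_of_le hxy (min_le_right _ _))
  have hd1 : ‖d‖ ≤ 1 := by
    have he : d = (y - x₀) - (x - x₀) := by rw [hd]; abel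
    calc ‖d‖ ≤ ‖y - x₀‖ + ‖x - x₀‖ := by rw [he]; exact norm_sub_le _ _
      _ ≤ 1 := by linarith
  rw [hfd]
  have hKL' := hKL x hx1
  have habs : |(g x + (1/2) * ‖y - x‖ ^ 2) - g x₀| ≤ |g x - g x₀| + (1/2) * ‖d‖ ^ 2 := by
    have he : (g x + (1/2) * ‖y - x‖ ^ 2) - g x₀ = (g x - g x₀) + (1/2) * ‖d‖ ^ 2 := by
      rw [hd]; ring
    rw [he]
    have h5 : |(g x - g x₀) + (1/2) * ‖d‖ ^ 2| ≤ |g x - g x₀| + |(1/2) * ‖d‖ ^ 2| := abs_add_le _ _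
    rwa [abs_of_nonneg (show (0:ℝ) ≤ (1/2) * ‖d‖ ^ 2 by positivity)] at h5
  calc |(g x + (1/2) * ‖y - x‖ ^ 2) - g x₀| ^ θ
      ≤ (|g x - g x₀| + (1/2) * ‖d‖ ^ 2) ^ θ :=
        Real.rpow_le_rpow (abs_nonneg _) habs hθ0
    _ ≤ |g x - g x₀| ^ θ + ((1/2) * ‖d‖ ^ 2) ^ θ :=
        rpow_add_le_add_rpow_real (abs_nonneg _) (by positivity) hθ0 hθ₂.le
    _ ≤ K * ‖gradient g x‖ + ‖d‖ := by
        have h1 : ((1/2) * ‖d‖ ^ 2) ^ θ ≤ ‖d‖ := by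
          have ha : ((1/2) * ‖d‖ ^ 2) ^ θ ≤ (‖d‖ ^ 2) ^ θ :=
            Real.rpow_le_rpow (by positivity) (by linarith [sq_nonneg ‖d‖]) hθ0
          have hb : (‖d‖ ^ 2 : ℝ) = ‖d‖ ^ (2:ℝ) := by
            rw [← Real.rpow_natCast ‖d‖ 2]; norm_num
          have hc : (‖d‖ ^ (2:ℝ)) ^ θ = ‖d‖ ^ (2 * θ) :=
            (Real.rpow_mul (norm_nonneg d) 2 θ).symm
          have hdd : ‖d‖ ^ (2 * θ) ≤ ‖d‖ ^ (1:ℝ) :=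
            Real.rpow_le_rpow_of_exponent_ge' (norm_nonneg d) hd1 (by norm_num) (by linarith)
          rw [hb, hc] at ha
          simpa using ha.trans hdd
        exact add_le_add hKL' h1
    _ ≤ K * ‖L‖ + ‖L‖ := add_le_add (mul_le_mul_of_nonneg_left hgL hK.le) hdL
    _ = (K + 1) * ‖L‖ := by ring
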